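/- Let γ > 2 and define F : (0,1) → ℝ by F(t) = η_γ(t) − (γ/(γ−1))·t − (γ/(2(γ−1)))·t². Then for each k ∈ {0,1,2}, the limit lim_{t→0⁺} t^{k−2} · F^{(k)}(t) = 0 holds, where F^{(k)} denotes the k-th derivative of F. -/

import Mathlib

open Real Filter Set Topology

/-- The Rényi entropy function `η_γ : ℝ → ℝ`. It vanishes outside the open unit
interval; for `t ∈ (0,1)` it equals `(1/(1-γ))·ln(t^γ + (1-t)^γ)` when `γ ≠ 1`
and `-t·ln t - (1-t)·ln(1-t)` when `γ = 1`. Powers are real powers. -/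
noncomputable def renyiEntropy (γ : ℝ) (t : ℝ) : ℝ :=
  if t ∈ Set.Ioo (0 : ℝ) 1 then
    if γ = 1 then -t * Real.log t - (1 - t) * Real.log (1 - t)
    else (1 / (1 - γ)) * Real.log (t ^ γ + (1 - t) ^ γ)
  else 0

namespace RenyiAux

noncomputable def rg (γ t : ℝ) : ℝ := t ^ γ + (1 - t) ^ γ
noncomputable def rg1 (γ t : ℝ) : ℝ := γ * t ^ (γ - 1) - γ * (1 - t) ^ (γ - 1)
noncomputable def rg2 (γ t : ℝ) : ℝ :=
  γ * ((γ - 1) * t ^ (γ - 2)) + γ * ((γ - 1) * (1 - t) ^ (γ - 2))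

noncomputable def G (γ t : ℝ) : ℝ :=
  (1 / (1 - γ)) * Real.log (rg γ t) - (γ / (γ - 1)) * t - (γ / (2 * (γ - 1))) * t ^ 2
noncomputable def G1 (γ t : ℝ) : ℝ :=
  (1 / (1 - γ)) * (rg1 γ t / rg γ t) - γ / (γ - 1) - γ / (γ - 1) * t
noncomputable def G2 (γ t : ℝ) : ℝ :=
  (1 / (1 - γ)) * ((rg2 γ t * rg γ t - rg1 γ t * rg1 γ t) / (rg γ t) ^ 2) - γ / (γ - 1)

variable {γ t : ℝ}

lemma rg_pos (ht : t ∈ Ioo (0:ℝ) 1) : 0 < rg γ t :=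
  add_pos (Real.rpow_pos_of_pos ht.1 γ) (Real.rpow_pos_of_pos (by linarith [ht.2]) γ)

lemma hasDerivAt_pow_one_sub (p : ℝ) (ht : t ∈ Ioo (0:ℝ) 1) :
    HasDerivAt (fun s : ℝ => (1 - s) ^ p) (p * (1 - t) ^ (p - 1) * (-1)) t := by
  have hin : HasDerivAt (fun s : ℝ => 1 - s) (-1) t := (hasDerivAt_id t).const_sub 1
  have hne : (1 : ℝ) - t ≠ 0 := by have := ht.2; intro h; linarith [h]
  exact (Real.hasDerivAt_rpow_const (x := 1 - t) (p := p) (Or.inl hne)).comp t hin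

lemma hasDerivAt_rg (ht : t ∈ Ioo (0:ℝ) 1) : HasDerivAt (rg γ) (rg1 γ t) t := by
  have h1 : HasDerivAt (fun s : ℝ => s ^ γ) (γ * t ^ (γ - 1)) t :=
    Real.hasDerivAt_rpow_const (Or.inl ht.1.ne')
  have h := h1.add (hasDerivAt_pow_one_sub γ ht)
  convert h using 1
  iterate 3 rfl
  simp [rg1]; ring

lemma hasDerivAt_rg1 (ht : t ∈ Ioo (0:ℝ) 1) : HasDerivAt (rg1 γ) (rg2 γ t) t := by
  have h1 : HasDerivAt (fun s : ℝ => s ^ (γ - 1)) ((γ - 1) * t ^ (γ - 1 - 1)) t :=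
    Real.hasDerivAt_rpow_const (Or.inl ht.1.ne')
  have h := (h1.const_mul γ).sub ((hasDerivAt_pow_one_sub (γ - 1) ht).const_mul γ)
  convert h using 1
  iterate 3 rfl
  simp only [rg2]
  rw [show γ - 1 - 1 = γ - 2 by ring]
  ring

lemma hasDerivAt_G (hγ1 : γ - 1 ≠ 0) (ht : t ∈ Ioo (0:ℝ) 1) : HasDerivAt (G γ) (G1 γ t) t := by
  have hlog : HasDerivAt (fun s : ℝ => Real.log (rg γ s)) (rg1 γ t / rg γ t) t :=
    (hasDerivAt_rg ht).log (rg_pos ht).ne'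
  have hlin : HasDerivAt (fun s : ℝ => (γ / (γ - 1)) * s) (γ / (γ - 1)) t := by
    simpa using (hasDerivAt_id t).const_mul (γ / (γ - 1))
  have hq : HasDerivAt (fun s : ℝ => (γ / (2 * (γ - 1))) * s ^ 2)
      ((γ / (2 * (γ - 1))) * (2 * t)) t := by
    simpa using (hasDerivAt_pow 2 t).const_mul (γ / (2 * (γ - 1)))
  have h := ((hlog.const_mul (1 / (1 - γ))).sub hlin).sub hq
  convert h using 1
  iterate 3 rfl
  simp only [G1]
  field_simp

lemma hasDerivAt_G1 (ht : t ∈ Ioo (0:ℝ) 1) : HasDerivAt (G1 γ) (G2 γ t) t := by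
  have hdiv : HasDerivAt (fun s : ℝ => rg1 γ s / rg γ s)
      ((rg2 γ t * rg γ t - rg1 γ t * rg1 γ t) / (rg γ t) ^ 2) t :=
    (hasDerivAt_rg1 ht).div (hasDerivAt_rg ht) (rg_pos ht).ne'
  have hlin : HasDerivAt (fun s : ℝ => γ / (γ - 1) * s) (γ / (γ - 1)) t := by
    simpa using (hasDerivAt_id t).const_mul (γ / (γ - 1))
  have h := ((hdiv.const_mul (1 / (1 - γ))).sub (hasDerivAt_const t (γ / (γ - 1)))).sub hlin
  convert h using 1
  iterate 3 rfl
  simp only [G2]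
  ring


lemma tpow0 {p : ℝ} (hp : 0 < p) : Tendsto (fun t : ℝ => t ^ p) (𝓝[>] (0:ℝ)) (𝓝 0) := by
  have h := (Real.continuousAt_rpow_const 0 p (Or.inr hp.le)).tendsto
  rw [Real.zero_rpow hp.ne'] at h
  exact h.mono_left nhdsWithin_le_nhds

lemma tone (p : ℝ) : Tendsto (fun t : ℝ => (1 - t) ^ p) (𝓝[>] (0:ℝ)) (𝓝 1) := by
  have hc : ContinuousAt (fun t : ℝ => (1 - t) ^ p) 0 :=
    (continuousAt_const.sub continuousAt_id).rpow_const (Or.inl (by norm_num))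
  have h := hc.tendsto
  norm_num [Real.one_rpow] at h
  exact h.mono_left nhdsWithin_le_nhds

lemma tg (hγ : 2 < γ) : Tendsto (rg γ) (𝓝[>] (0:ℝ)) (𝓝 1) := by
  have h := (tpow0 (by linarith : (0:ℝ) < γ)).add (tone γ)
  unfold rg; simpa using h

lemma tg1 (hγ : 2 < γ) : Tendsto (rg1 γ) (𝓝[>] (0:ℝ)) (𝓝 (-γ)) := by
  have h := ((tpow0 (by linarith : (0:ℝ) < γ - 1)).const_mul γ).sub
    ((tone (γ - 1)).const_mul γ)
  unfold rg1; simpa using h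

lemma tg2 (hγ : 2 < γ) : Tendsto (rg2 γ) (𝓝[>] (0:ℝ)) (𝓝 (γ * (γ - 1))) := by
  have h := (((tpow0 (by linarith : (0:ℝ) < γ - 2)).const_mul (γ - 1)).const_mul γ).add
    ((((tone (γ - 2)).const_mul (γ - 1)).const_mul γ))
  unfold rg2; simpa using h

lemma tG2 (hγ : 2 < γ) : Tendsto (G2 γ) (𝓝[>] (0:ℝ)) (𝓝 0) := by
  have hγ1 : γ - 1 ≠ 0 := by intro h; linarith
  have h : Tendsto (G2 γ) (𝓝[>] (0:ℝ))
      (𝓝 ((1 / (1 - γ)) * ((γ * (γ - 1) * 1 - (-γ) * (-γ)) / (1:ℝ) ^ 2) - γ / (γ - 1))) := by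
    refine Tendsto.sub (Tendsto.const_mul _ (Tendsto.div ?_ ((tg hγ).pow 2) (by norm_num)))
      tendsto_const_nhds
    exact ((tg2 hγ).mul (tg hγ)).sub ((tg1 hγ).mul (tg1 hγ))
  convert h using 2
  have hne : (1:ℝ) - γ ≠ 0 := by intro h'; linarith
  field_simp
  ring

lemma keyG1 (hγ : 2 < γ) (ht : t ∈ Ioo (0:ℝ) 1) :
    t⁻¹ * G1 γ t =
      -(γ / (γ - 1)) * ((t ^ (γ - 2) + (1 + t) * t ^ (γ - 1) - t * (1 - t) ^ (γ - 1))
        / rg γ t) := by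
  obtain ⟨ht0, ht1⟩ := ht
  have h1t : (0:ℝ) < 1 - t := by linarith
  have hg : (0:ℝ) < rg γ t := rg_pos ⟨ht0, ht1⟩
  have hA1 : t ^ (γ - 1) = t ^ (γ - 2) * t := by
    have h := Real.rpow_add ht0 (γ - 2) 1
    rw [Real.rpow_one, show γ - 2 + 1 = γ - 1 by ring] at h
    exact h
  have hA2 : t ^ γ = t ^ (γ - 2) * t * t := by
    have h := Real.rpow_add ht0 (γ - 1) 1
    rw [Real.rpow_one, show γ - 1 + 1 = γ by ring] at h
    rw [h, hA1]
  have hB : (1 - t) ^ γ = (1 - t) ^ (γ - 1) * (1 - t) := by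
    have h := Real.rpow_add h1t (γ - 1) 1
    rw [Real.rpow_one, show γ - 1 + 1 = γ by ring] at h
    exact h
  have hγ1 : γ - 1 ≠ 0 := by intro h; linarith
  have hγ1' : (1:ℝ) - γ ≠ 0 := by intro h; linarith
  simp only [G1, rg1, rg] at hg ⊢
  rw [hA2, hB] at hg
  rw [hA1, hA2, hB]
  field_simp
  ring

lemma tinvG1 (hγ : 2 < γ) : Tendsto (fun t : ℝ => t⁻¹ * G1 γ t) (𝓝[>] (0:ℝ)) (𝓝 0) := by
  have hid : Tendsto (fun t : ℝ => t) (𝓝[>] (0:ℝ)) (𝓝 0) :=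
    tendsto_id.mono_right nhdsWithin_le_nhds
  have hnum : Tendsto
      (fun t : ℝ => t ^ (γ - 2) + (1 + t) * t ^ (γ - 1) - t * (1 - t) ^ (γ - 1))
      (𝓝[>] (0:ℝ)) (𝓝 0) := by
    have h := ((tpow0 (by linarith : (0:ℝ) < γ - 2)).add
      (((tendsto_const_nhds (x := (1:ℝ))).add hid).mul (tpow0 (by linarith : (0:ℝ) < γ - 1)))).sub
      (hid.mul (tone (γ - 1)))
    simpa using h
  have h := (hnum.div (tg hγ) one_ne_zero).const_mul (-(γ / (γ - 1)))
  simp only [zero_div, mul_zero] at h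
  refine h.congr' ?_ |>.mono_right le_rfl
  filter_upwards [Ioo_mem_nhdsGT_of_mem (by norm_num : (0:ℝ) ∈ Ico (0:ℝ) 1)] with t ht
  exact (keyG1 hγ ht).symm

lemma tG (hγ : 2 < γ) : Tendsto (G γ) (𝓝[>] (0:ℝ)) (𝓝 0) := by
  have hid : Tendsto (fun t : ℝ => t) (𝓝[>] (0:ℝ)) (𝓝 0) :=
    tendsto_id.mono_right nhdsWithin_le_nhds
  have hlog : Tendsto (fun t : ℝ => Real.log (rg γ t)) (𝓝[>] (0:ℝ)) (𝓝 0) := by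
    have := (Real.continuousAt_log one_ne_zero).tendsto.comp (tg hγ)
    simpa [Function.comp_def] using this
  have h := ((hlog.const_mul (1 / (1 - γ))).sub (hid.const_mul (γ / (γ - 1)))).sub
    ((hid.pow 2).const_mul (γ / (2 * (γ - 1))))
  norm_num at h
  exact h.congr fun t => by simp [G]

end RenyiAux

open RenyiAux in
/-- For `γ > 2` and `F(t) = η_γ(t) − (γ/(γ−1))·t − (γ/(2(γ−1)))·t²`, one has
`lim_{t→0⁺} t^{k−2}·F^{(k)}(t) = 0` for `k = 0, 1, 2`. -/
theorem renyiEntropy_eff_gt_two {γ : ℝ} (hγ : 2 < γ) (k : ℕ) (hk : k ≤ 2) :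
    Filter.Tendsto
      (fun t : ℝ => t ^ ((k : ℝ) - 2)
        * iteratedDeriv k
            (fun s : ℝ =>
              renyiEntropy γ s - (γ / (γ - 1)) * s - (γ / (2 * (γ - 1))) * s ^ 2) t)
      (nhdsWithin 0 (Set.Ioi 0)) (nhds 0) := by
  have hγ1 : γ - 1 ≠ 0 := by intro h; linarith
  set Fn : ℝ → ℝ := fun s : ℝ =>
    renyiEntropy γ s - (γ / (γ - 1)) * s - (γ / (2 * (γ - 1))) * s ^ 2 with hFn
  have hFG : ∀ s ∈ Ioo (0:ℝ) 1, Fn s = G γ s := by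
    intro s hs
    simp only [hFn, renyiEntropy, if_pos hs, if_neg (by intro h; linarith : ¬ γ = 1), G, rg]
  have hIoo : Ioo (0:ℝ) 1 ∈ 𝓝[>] (0:ℝ) :=
    Ioo_mem_nhdsGT_of_mem (by norm_num : (0:ℝ) ∈ Ico (0:ℝ) 1)
  have hderiv : ∀ t ∈ Ioo (0:ℝ) 1, deriv Fn t = G1 γ t := by
    intro t ht
    have hev : Fn =ᶠ[𝓝 t] G γ :=
      eventually_of_mem (Ioo_mem_nhds ht.1 ht.2) hFG
    exact hev.deriv_eq.trans (hasDerivAt_G hγ1 ht).deriv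
  have hderiv2 : ∀ t ∈ Ioo (0:ℝ) 1, deriv (deriv Fn) t = G2 γ t := by
    intro t ht
    have hev : deriv Fn =ᶠ[𝓝 t] G1 γ :=
      eventually_of_mem (Ioo_mem_nhds ht.1 ht.2) hderiv
    exact hev.deriv_eq.trans (hasDerivAt_G1 ht).deriv
  interval_cases k
  · -- k = 0 : L'Hôpital
    have hlh : Tendsto (fun t : ℝ => G γ t / t ^ 2) (𝓝[>] (0:ℝ)) (𝓝 0) := by
      apply HasDerivAt.lhopital_zero_nhdsGT (f' := G1 γ) (g' := fun t : ℝ => 2 * t)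
      · filter_upwards [hIoo] with t ht
        exact hasDerivAt_G hγ1 ht
      · exact Filter.Eventually.of_forall fun t => by simpa using hasDerivAt_pow 2 t
      · filter_upwards [self_mem_nhdsWithin] with t ht
        exact mul_ne_zero two_ne_zero (ne_of_gt ht)
      · exact tG hγ
      · have := ((continuous_pow 2).tendsto (0:ℝ)).mono_left
          (nhdsWithin_le_nhds (s := Ioi (0:ℝ)))
        simpa using this
      · have h := (tinvG1 hγ).div_const 2
        norm_num at h
        refine h.congr' ?_
        filter_upwards [self_mem_nhdsWithin] with t ht
        have htne : (t:ℝ) ≠ 0 := ne_of_gt ht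
        rw [inv_mul_eq_div, div_div, mul_comm]
    refine hlh.congr' ?_
    filter_upwards [hIoo] with t ht
    rw [iteratedDeriv_zero, show ((0:ℕ):ℝ) - 2 = -2 by norm_num,
      Real.rpow_neg ht.1.le, show (2:ℝ) = ((2:ℕ):ℝ) by norm_num,
      Real.rpow_natCast, hFG t ht, inv_mul_eq_div]
  · -- k = 1
    refine (tinvG1 hγ).congr' ?_
    filter_upwards [hIoo] with t ht
    rw [iteratedDeriv_one, hderiv t ht, show ((1:ℕ):ℝ) - 2 = -1 by norm_num,
      Real.rpow_neg ht.1.le, Real.rpow_one]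
  · -- k = 2
    refine (tG2 hγ).congr' ?_
    filter_upwards [hIoo] with t ht
    rw [show (2:ℕ) = 1 + 1 by norm_num, iteratedDeriv_succ, iteratedDeriv_one,
      hderiv2 t ht, show ((1+1:ℕ):ℝ) - 2 = 0 by norm_num, Real.rpow_zero, one_mul]
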